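/- For every real w > 1, (1 - w·β(w/2)) / (w² - 1) = ∫_0^∞ e^{-wx} · ( sinh(x) - 2·sinh(x)·(π/4 - arctan(e^{-x})) + e^{-x} - 1 ) dx, where β(z) := ∫_0^∞ e^{-zs}/(1 + e^{-s}) ds for z > 0. -/

import Mathlib

/-- The beta function via its Laplace-integral representation,
`β(z) = ∫_0^∞ e^{-zs}/(1 + e^{-s}) ds` for `z > 0`. -/
noncomputable def betaFn (z : ℝ) : ℝ :=
  ∫ s in Set.Ioi (0 : ℝ), Real.exp (-z * s) / (1 + Real.exp (-s))


open Real MeasureTheory Set Filter Topology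

namespace LaplaceAux4

noncomputable def gden (t : ℝ) : ℝ := 1 / (1 + Real.exp (-2 * t))
noncomputable def gA (x : ℝ) : ℝ := Real.pi / 4 - Real.arctan (Real.exp (-x))
noncomputable def Hf (w x : ℝ) : ℝ :=
  (Real.exp (-(w - 1) * x) / (w - 1) - Real.exp (-(w + 1) * x) / (w + 1)) / 2

lemma gden_pos_denom (t : ℝ) : 0 < 1 + Real.exp (-2 * t) := by positivity

lemma gden_cont : Continuous gden :=
  continuous_const.div (continuous_const.add ((continuous_const.mul continuous_id).rexp))
    fun t => (gden_pos_denom t).ne'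

lemma gA_cont : Continuous gA :=
  continuous_const.sub (Real.continuous_arctan.comp continuous_neg.rexp)

lemma hasDerivAt_exp_neg_mul (c x : ℝ) :
    HasDerivAt (fun y : ℝ => Real.exp (-c * y)) (-c * Real.exp (-c * x)) x := by
  have h : HasDerivAt (fun y : ℝ => -c * y) (-c) x := by
    simpa using (hasDerivAt_id x).const_mul (-c)
  simpa [mul_comm] using h.exp

lemma tendsto_exp_neg_mul {c : ℝ} (hc : 0 < c) :
    Tendsto (fun x : ℝ => Real.exp (-c * x)) atTop (𝓝 0) := by
  have h : Tendsto (fun x : ℝ => c * x) atTop atTop :=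
    Tendsto.const_mul_atTop hc tendsto_id
  refine Tendsto.congr (fun x => ?_) (Real.tendsto_exp_neg_atTop_nhds_zero.comp h)
  simp [Function.comp, neg_mul]

lemma integral_exp_neg_mul {a : ℝ} (ha : 0 < a) :
    ∫ x in Ioi (0 : ℝ), Real.exp (-a * x) = 1 / a := by
  have h := integral_comp_mul_left_Ioi (fun y => Real.exp (-y)) 0 ha
  simp only [mul_zero, smul_eq_mul, integral_exp_neg_Ioi_zero] at h
  simpa [neg_mul, one_div] using h

lemma integrableOn_exp_mul_bdd {a C : ℝ} (ha : 0 < a) {f : ℝ → ℝ}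
    (hf : Continuous f) (hC : ∀ x ∈ Ioi (0 : ℝ), |f x| ≤ C) :
    IntegrableOn (fun x => Real.exp (-a * x) * f x) (Ioi (0 : ℝ)) := by
  have hint : IntegrableOn (fun x => C * Real.exp (-a * x)) (Ioi (0 : ℝ)) :=
    (exp_neg_integrableOn_Ioi 0 ha).const_mul C
  refine hint.mono' ?_ ?_
  · exact (((continuous_const.mul continuous_id).rexp).mul hf).aestronglyMeasurable
  · filter_upwards [ae_restrict_mem measurableSet_Ioi] with x hx
    have h1 := hC x hx
    have h2 : (0 : ℝ) < Real.exp (-a * x) := Real.exp_pos _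
    rw [norm_mul, Real.norm_eq_abs, Real.norm_eq_abs, abs_of_pos h2, mul_comm C]
    exact mul_le_mul_of_nonneg_left h1 h2.le

lemma sinh_rw (w x : ℝ) :
    Real.exp (-w * x) * Real.sinh x
      = (Real.exp (-(w - 1) * x) - Real.exp (-(w + 1) * x)) / 2 := by
  rw [Real.sinh_eq, show -(w - 1) * x = -w * x + x by ring,
    show -(w + 1) * x = -w * x + -x by ring, Real.exp_add, Real.exp_add]
  ring

lemma hasDerivAt_Hf {w : ℝ} (hw : 1 < w) (x : ℝ) :
    HasDerivAt (Hf w) (-(Real.exp (-w * x) * Real.sinh x)) x := by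
  have h1 : (0:ℝ) < w - 1 := by linarith
  have h2 : (0:ℝ) < w + 1 := by linarith
  have d := (((hasDerivAt_exp_neg_mul (w - 1) x).div_const (w - 1)).sub
    ((hasDerivAt_exp_neg_mul (w + 1) x).div_const (w + 1))).div_const 2
  refine d.congr_deriv ?_
  rw [sinh_rw w x]
  field_simp
  ring

lemma hasDerivAt_gA (x : ℝ) :
    HasDerivAt gA (Real.exp (-x) * gden x) x := by
  have he : HasDerivAt (fun y : ℝ => Real.exp (-y)) (Real.exp (-x) * (-1)) x := by
    simpa using ((hasDerivAt_id x).neg).exp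
  have ha := he.arctan
  have hd := (hasDerivAt_const x (Real.pi / 4)).sub ha
  refine hd.congr_deriv ?_
  have h2 : Real.exp (-x) ^ 2 = Real.exp (-2 * x) := by
    rw [sq, ← Real.exp_add]; congr 1; ring
  unfold gden
  rw [h2]
  ring

end LaplaceAux4

open Real MeasureTheory Set Filter Topology LaplaceAux4

/-- For every `w > 1`, `(1 - w β(w/2))/(w² - 1)` is the Laplace transform at `w` of
`sinh(x) - 2 sinh(x)(π/4 - arctan(e^{-x})) + e^{-x} - 1`. -/
theorem laplace_cosh_khintchine_charFun (w : ℝ) (hw : 1 < w) :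
    (1 - w * betaFn (w / 2)) / (w ^ 2 - 1) =
      ∫ x in Set.Ioi (0 : ℝ), Real.exp (-w * x) *
        (Real.sinh x - 2 * Real.sinh x * (Real.pi / 4 - Real.arctan (Real.exp (-x)))
          + Real.exp (-x) - 1) := by
  have hw0 : (0:ℝ) < w := by linarith
  have h1 : (0:ℝ) < w - 1 := by linarith
  have h2 : (0:ℝ) < w + 1 := by linarith
  have h3 : (0:ℝ) < w + 2 := by linarith
  -- basic integrabilities
  have gden_bd : ∀ t ∈ Ioi (0:ℝ), |gden t| ≤ 1 := by
    intro t _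
    have hp := gden_pos_denom t
    have he := Real.exp_pos (-2 * t)
    rw [gden, abs_of_pos (by positivity), div_le_one hp]
    linarith
  have ig : IntegrableOn (fun t => Real.exp (-w * t) * gden t) (Ioi (0:ℝ)) :=
    integrableOn_exp_mul_bdd hw0 gden_cont gden_bd
  have ig2 : IntegrableOn (fun t => Real.exp (-(w + 2) * t) * gden t) (Ioi (0:ℝ)) :=
    integrableOn_exp_mul_bdd h3 gden_cont gden_bd
  have ie1 : IntegrableOn (fun x => Real.exp (-(w - 1) * x)) (Ioi (0:ℝ)) :=
    exp_neg_integrableOn_Ioi 0 h1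
  have ie2 : IntegrableOn (fun x => Real.exp (-(w + 1) * x)) (Ioi (0:ℝ)) :=
    exp_neg_integrableOn_Ioi 0 h2
  have ie3 : IntegrableOn (fun x => Real.exp (-w * x)) (Ioi (0:ℝ)) :=
    exp_neg_integrableOn_Ioi 0 hw0
  have isinh : IntegrableOn (fun x => Real.exp (-w * x) * Real.sinh x) (Ioi (0:ℝ)) := by
    have : (fun x => Real.exp (-w * x) * Real.sinh x)
        = fun x => (Real.exp (-(w - 1) * x) - Real.exp (-(w + 1) * x)) / 2 :=
      funext fun x => sinh_rw w x
    rw [this]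
    exact (ie1.sub ie2).div_const 2
  -- boundedness of the arctan factor
  have hAbd : ∀ x : ℝ, |gA x| ≤ Real.pi := by
    intro x
    have l1 := Real.arctan_lt_pi_div_two (Real.exp (-x))
    have l2 := Real.neg_pi_div_two_lt_arctan (Real.exp (-x))
    have hp := Real.pi_pos
    rw [abs_le, gA]
    constructor <;> linarith
  have hesinh : ∀ x : ℝ, Real.exp (-x) * Real.sinh x = (1 - Real.exp (-2 * x)) / 2 := by
    intro x
    have h : Real.exp (-x) * Real.exp x = 1 := by rw [← Real.exp_add]; simp
    rw [Real.sinh_eq, show (-2:ℝ) * x = -x + -x by ring, Real.exp_add]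
    linear_combination h / 2
  have iA : IntegrableOn (fun x => Real.exp (-w * x) * Real.sinh x * gA x) (Ioi (0:ℝ)) := by
    have hb : ∀ x ∈ Ioi (0:ℝ), |Real.exp (-x) * Real.sinh x * gA x| ≤ Real.pi := by
      intro x hx
      have h5 : |Real.exp (-x) * Real.sinh x| ≤ 1 := by
        rw [hesinh x, abs_le]
        have e1 := Real.exp_pos (-2 * x)
        have e2 : Real.exp (-2 * x) ≤ 1 := Real.exp_le_one_iff.mpr (by simp at hx ⊢; nlinarith)
        constructor <;> linarith
      calc |Real.exp (-x) * Real.sinh x * gA x|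
          = |Real.exp (-x) * Real.sinh x| * |gA x| := abs_mul _ _
        _ ≤ 1 * Real.pi := mul_le_mul h5 (hAbd x) (abs_nonneg _) one_pos.le
        _ = Real.pi := one_mul _
    have hcont : Continuous fun x => Real.exp (-x) * Real.sinh x * gA x :=
      ((continuous_neg.rexp).mul Real.continuous_sinh).mul gA_cont
    have h := integrableOn_exp_mul_bdd h1 hcont hb
    have key : ∀ x : ℝ, Real.exp (-(w - 1) * x) * (Real.exp (-x) * Real.sinh x * gA x)
        = Real.exp (-w * x) * Real.sinh x * gA x := by
      intro x
      rw [show Real.exp (-(w - 1) * x) * (Real.exp (-x) * Real.sinh x * gA x)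
          = (Real.exp (-(w - 1) * x) * Real.exp (-x)) * Real.sinh x * gA x by ring,
        ← Real.exp_add, show -(w - 1) * x + -x = -w * x by ring]
    simpa only [key] using h
  -- pointwise identity for H * (e^{-x} g)
  have hK : ∀ x : ℝ, Hf w x * (Real.exp (-x) * gden x)
      = 1 / (2 * (w - 1)) * (Real.exp (-w * x) * gden x)
        - 1 / (2 * (w + 1)) * (Real.exp (-(w + 2) * x) * gden x) := by
    intro x
    have e1 : Real.exp (-(w - 1) * x) * Real.exp (-x) = Real.exp (-w * x) := by
      rw [← Real.exp_add]; congr 1; ring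
    have e2 : Real.exp (-(w + 1) * x) * Real.exp (-x) = Real.exp (-(w + 2) * x) := by
      rw [← Real.exp_add]; congr 1; ring
    rw [Hf, ← e1, ← e2]
    field_simp
  have iK : IntegrableOn (fun x => Hf w x * (Real.exp (-x) * gden x)) (Ioi (0:ℝ)) := by
    have h : IntegrableOn (fun x => 1 / (2 * (w - 1)) * (Real.exp (-w * x) * gden x)
        - 1 / (2 * (w + 1)) * (Real.exp (-(w + 2) * x) * gden x)) (Ioi (0:ℝ)) :=
      (ig.const_mul (1 / (2 * (w - 1)))).sub (ig2.const_mul (1 / (2 * (w + 1))))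
    simpa only [← hK] using h
  -- IBP
  have hΦd : ∀ x : ℝ, HasDerivAt (fun x => Hf w x * gA x)
      (-(Real.exp (-w * x) * Real.sinh x * gA x) + Hf w x * (Real.exp (-x) * gden x)) x := by
    intro x
    have := (hasDerivAt_Hf hw x).mul (hasDerivAt_gA x)
    exact this.congr_deriv (by ring)
  have hΦtend : Tendsto (fun x => Hf w x * gA x) atTop (𝓝 0) := by
    have hH : Tendsto (fun x => Hf w x) atTop (𝓝 0) := by
      have := (((tendsto_exp_neg_mul h1).div_const (w - 1)).sub
        ((tendsto_exp_neg_mul h2).div_const (w + 1))).div_const 2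
      simpa [Hf] using this
    have hA : Tendsto gA atTop (𝓝 (Real.pi / 4)) := by
      have harc : Tendsto (fun x : ℝ => Real.arctan (Real.exp (-x))) atTop (𝓝 0) := by
        have := (Real.continuous_arctan.tendsto 0).comp Real.tendsto_exp_neg_atTop_nhds_zero
        simpa [Function.comp_def, Real.arctan_zero] using this
      have := harc.const_sub (Real.pi / 4)
      rw [show gA = fun x => Real.pi / 4 - Real.arctan (Real.exp (-x)) from rfl]
      simpa only [sub_zero] using this
    simpa using hH.mul hA
  have hIBP : ∫ x in Ioi (0:ℝ),
      (-(Real.exp (-w * x) * Real.sinh x * gA x) + Hf w x * (Real.exp (-x) * gden x))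
      = 0 - Hf w 0 * gA 0 :=
    integral_Ioi_of_hasDerivAt_of_tendsto' (fun x _ => hΦd x) (iA.neg.add iK) hΦtend
  have iAneg : IntegrableOn (fun x => -(Real.exp (-w * x) * Real.sinh x * gA x)) (Ioi (0:ℝ)) :=
    iA.neg
  have hgA0 : gA 0 = 0 := by
    rw [gA]; simp [Real.arctan_one]
  rw [hgA0, mul_zero, sub_zero, integral_add iAneg iK, integral_neg] at hIBP
  -- F = ∫ K
  have hF : ∫ x in Ioi (0:ℝ), Real.exp (-w * x) * Real.sinh x * gA x
      = ∫ x in Ioi (0:ℝ), Hf w x * (Real.exp (-x) * gden x) := by linarith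
  -- value of ∫ K
  have hKval : ∫ x in Ioi (0:ℝ), Hf w x * (Real.exp (-x) * gden x)
      = 1 / (2 * (w - 1)) * (∫ t in Ioi (0:ℝ), Real.exp (-w * t) * gden t)
        - 1 / (2 * (w + 1)) * (∫ t in Ioi (0:ℝ), Real.exp (-(w + 2) * t) * gden t) := by
    have igc : IntegrableOn (fun x => 1 / (2 * (w - 1)) * (Real.exp (-w * x) * gden x))
        (Ioi (0:ℝ)) := ig.const_mul _
    have ig2c : IntegrableOn (fun x => 1 / (2 * (w + 1)) * (Real.exp (-(w + 2) * x) * gden x))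
        (Ioi (0:ℝ)) := ig2.const_mul _
    simp only [hK]
    rw [integral_sub igc ig2c, integral_const_mul, integral_const_mul]
  -- G2 = 1/w - G
  have hGG2 : (∫ t in Ioi (0:ℝ), Real.exp (-w * t) * gden t)
      + (∫ t in Ioi (0:ℝ), Real.exp (-(w + 2) * t) * gden t) = 1 / w := by
    rw [← integral_add ig ig2]
    have hpt : ∀ t : ℝ, Real.exp (-w * t) * gden t + Real.exp (-(w + 2) * t) * gden t
        = Real.exp (-w * t) := by
      intro t
      have e2 : Real.exp (-(w + 2) * t) = Real.exp (-w * t) * Real.exp (-2 * t) := by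
        rw [← Real.exp_add]; congr 1; ring
      rw [e2, gden]
      field_simp
    simp only [hpt]
    exact integral_exp_neg_mul hw0
  -- betaFn (w/2) = 2 G
  have hbeta : betaFn (w / 2) = 2 * ∫ t in Ioi (0:ℝ), Real.exp (-w * t) * gden t := by
    have h := integral_comp_mul_left_Ioi
      (fun s => Real.exp (-(w / 2) * s) / (1 + Real.exp (-s))) 0 two_pos
    simp only [mul_zero, smul_eq_mul] at h
    have key : ∀ x : ℝ, Real.exp (-(w / 2) * (2 * x)) / (1 + Real.exp (-(2 * x)))
        = Real.exp (-w * x) * gden x := by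
      intro x
      rw [show -(w / 2) * (2 * x) = -w * x by ring, show -(2 * x) = -2 * x by ring, gden]
      ring
    simp only [key] at h
    rw [betaFn]
    rw [h]
    ring
  -- split the RHS
  have hsplit : ∀ x : ℝ, Real.exp (-w * x) *
      (Real.sinh x - 2 * Real.sinh x * (Real.pi / 4 - Real.arctan (Real.exp (-x)))
        + Real.exp (-x) - 1)
      = Real.exp (-w * x) * Real.sinh x - 2 * (Real.exp (-w * x) * Real.sinh x * gA x)
        + (Real.exp (-(w + 1) * x) - Real.exp (-w * x)) := by
    intro x
    have e1 : Real.exp (-(w + 1) * x) = Real.exp (-w * x) * Real.exp (-x) := by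
      rw [← Real.exp_add]; congr 1; ring
    rw [gA, e1]
    ring
  have hIu : ∫ x in Ioi (0:ℝ), Real.exp (-w * x) * Real.sinh x
      = (1 / (w - 1) - 1 / (w + 1)) / 2 := by
    simp only [sinh_rw w]
    rw [integral_div, integral_sub ie1 ie2, integral_exp_neg_mul h1, integral_exp_neg_mul h2]
  have hRHS : (∫ x in Set.Ioi (0 : ℝ), Real.exp (-w * x) *
      (Real.sinh x - 2 * Real.sinh x * (Real.pi / 4 - Real.arctan (Real.exp (-x)))
        + Real.exp (-x) - 1))
      = (1 / (w - 1) - 1 / (w + 1)) / 2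
        - 2 * (∫ x in Ioi (0:ℝ), Real.exp (-w * x) * Real.sinh x * gA x)
        + (1 / (w + 1) - 1 / w) := by
    have iA2 : IntegrableOn (fun x => 2 * (Real.exp (-w * x) * Real.sinh x * gA x))
        (Ioi (0:ℝ)) := iA.const_mul 2
    have iI1 : IntegrableOn (fun x => Real.exp (-w * x) * Real.sinh x
        - 2 * (Real.exp (-w * x) * Real.sinh x * gA x)) (Ioi (0:ℝ)) := isinh.sub iA2
    have iI2 : IntegrableOn (fun x => Real.exp (-(w + 1) * x) - Real.exp (-w * x))
        (Ioi (0:ℝ)) := ie2.sub ie3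
    simp only [hsplit]
    rw [integral_add iI1 iI2, integral_sub isinh iA2, integral_sub ie2 ie3,
      integral_const_mul, hIu, integral_exp_neg_mul h2, integral_exp_neg_mul hw0]
  rw [hRHS, hF, hKval, hbeta]
  have hG2 : (∫ t in Ioi (0:ℝ), Real.exp (-(w + 2) * t) * gden t)
      = 1 / w - ∫ t in Ioi (0:ℝ), Real.exp (-w * t) * gden t := by linarith
  rw [hG2]
  have hne : w ^ 2 - 1 ≠ 0 := by nlinarith
  field_simp
  ring
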